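/- Let Σ ∈ ℝ^{d̄×d̄} be a nonzero positive semidefinite matrix with smallest eigenvalue Λ_min(Σ) = 0, and let ρ ∈ ℝ^{d̄} lie in the column space of Σ. Fix α > 0 and let β*^{(α)} := argmin{ f_α(β) : Σβ = ρ }, where f_α(β) := ‖β‖₁ + (α/2)‖β‖². Let X ∈ ℝ^{N×d̄}, ε ∈ ℝ^N, y = Xβ*^{(α)} + ε, let n > 0, and suppose the event bounds ‖XᵀX/n − Σ‖_∞ ≤ q_n, ‖Xᵀε/n‖_∞ ≤ r_n, and |(1/n)‖ε‖² − σ²| ≤ s_n hold for some reals q_n, r_n, s_n ≥ 0 and σ² ≥ 0. Let β̂^{(α)} be a minimizer of f_α(β) over the constraint set { β : (1/n)‖y − Xβ‖² ≤ A_n, ‖β‖₁ ≤ M } with A_n = σ² + s_n and M ≥ ‖β*^{(α)}‖₁. Then ‖β̂^{(α)} − β*^{(α)}‖² ≤ 2 v_n + 2(√d̄/α + M) v_n^{1/2}, where v_n := (4M r_n + 2 s_n + 4 M² q_n) / Λ_min⁺(Σ) and Λ_min⁺(Σ) is the smallest nonzero eigenvalue of Σ. -/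

import Mathlib

namespace Statement7

/-- The ℓ₁-norm of a vector. -/
noncomputable def l1norm {m : ℕ} (v : Fin m → ℝ) : ℝ := ∑ i, |v i|

/-- The squared Euclidean norm of a vector. -/
def sqnorm {m : ℕ} (v : Fin m → ℝ) : ℝ := ∑ i, (v i) ^ 2

/-- The smallest nonzero eigenvalue of a matrix. -/
noncomputable def lamMinPos {m : ℕ} (S : Matrix (Fin m) (Fin m) ℝ) : ℝ :=
  sInf {c : ℝ | c ≠ 0 ∧ ∃ v : Fin m → ℝ, v ≠ 0 ∧ S.mulVec v = c • v}

open Matrix Finset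

lemma sqnorm_nonneg {m : ℕ} (v : Fin m → ℝ) : 0 ≤ sqnorm v :=
  Finset.sum_nonneg fun i _ => sq_nonneg _

lemma l1norm_nonneg {m : ℕ} (v : Fin m → ℝ) : 0 ≤ l1norm v :=
  Finset.sum_nonneg fun i _ => abs_nonneg _

lemma sqnorm_eq_dot {m : ℕ} (v : Fin m → ℝ) : sqnorm v = v ⬝ᵥ v := by
  simp [sqnorm, dotProduct, sq]

lemma l1norm_sub_le {m : ℕ} (a b : Fin m → ℝ) : l1norm (a - b) ≤ l1norm a + l1norm b := by
  rw [l1norm, l1norm, l1norm, ← Finset.sum_add_distrib]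
  exact Finset.sum_le_sum fun i _ => abs_sub (a i) (b i)

lemma l1norm_le_sqrt {m : ℕ} (v : Fin m → ℝ) :
    l1norm v ≤ Real.sqrt m * Real.sqrt (sqnorm v) := by
  have h1 : (l1norm v) ^ 2 ≤ m * sqnorm v := by
    have := sq_sum_le_card_mul_sum_sq (s := (Finset.univ : Finset (Fin m)))
      (f := fun i => |v i|)
    simpa [l1norm, sqnorm, sq_abs] using this
  have h2 : l1norm v = Real.sqrt ((l1norm v) ^ 2) := (Real.sqrt_sq (l1norm_nonneg v)).symm
  rw [h2, ← Real.sqrt_mul (by positivity : (0:ℝ) ≤ (m:ℝ)) (sqnorm v)]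
  exact Real.sqrt_le_sqrt h1

lemma abs_apply_le_sqrt {m : ℕ} (v : Fin m → ℝ) (i : Fin m) :
    |v i| ≤ Real.sqrt (sqnorm v) := by
  rw [← Real.sqrt_sq_eq_abs]
  apply Real.sqrt_le_sqrt
  exact Finset.single_le_sum (f := fun j => (v j)^2) (fun j _ => sq_nonneg _) (Finset.mem_univ i)

lemma abs_dot_le {m : ℕ} (a b : Fin m → ℝ) (C : ℝ) (hC : ∀ i, |b i| ≤ C) :
    |a ⬝ᵥ b| ≤ l1norm a * C := by
  calc |∑ i, a i * b i| ≤ ∑ i, |a i * b i| := Finset.abs_sum_le_sum_abs _ _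
    _ ≤ ∑ i, |a i| * C := by
        refine Finset.sum_le_sum fun i _ => ?_
        rw [abs_mul]
        exact mul_le_mul_of_nonneg_left (hC i) (abs_nonneg _)
    _ = l1norm a * C := by rw [l1norm, Finset.sum_mul]

lemma quad_abs_bound {m : ℕ} (E : Matrix (Fin m) (Fin m) ℝ) (q : ℝ)
    (hE : ∀ i j, |E i j| ≤ q) (v : Fin m → ℝ) :
    |v ⬝ᵥ E.mulVec v| ≤ q * (l1norm v * l1norm v) := by
  have h : ∀ i, |(E.mulVec v) i| ≤ q * l1norm v := by
    intro i
    calc |∑ j, E i j * v j| ≤ ∑ j, |E i j * v j| := Finset.abs_sum_le_sum_abs _ _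
      _ ≤ ∑ j, q * |v j| := by
          refine Finset.sum_le_sum fun j _ => ?_
          rw [abs_mul]
          exact mul_le_mul_of_nonneg_right (hE i j) (abs_nonneg _)
      _ = q * l1norm v := by rw [l1norm, Finset.mul_sum]
  calc |v ⬝ᵥ E.mulVec v| ≤ l1norm v * (q * l1norm v) := abs_dot_le _ _ _ h
    _ = q * (l1norm v * l1norm v) := by ring

lemma sqnorm_sub_expand {m : ℕ} (a b : Fin m → ℝ) :
    sqnorm (a - b) = sqnorm a - 2 * (a ⬝ᵥ b) + sqnorm b := by
  simp only [sqnorm, dotProduct, Pi.sub_apply, Finset.mul_sum, ← Finset.sum_add_distrib,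
    ← Finset.sum_sub_distrib]
  exact Finset.sum_congr rfl fun i _ => by ring

lemma sqnorm_add_expand {m : ℕ} (a b : Fin m → ℝ) :
    sqnorm (a + b) = sqnorm a + 2 * (a ⬝ᵥ b) + sqnorm b := by
  simp only [sqnorm, dotProduct, Pi.add_apply, Finset.mul_sum, ← Finset.sum_add_distrib,
    ← Finset.sum_sub_distrib]
  exact Finset.sum_congr rfl fun i _ => by ring

lemma dot_self_pos {m : ℕ} (v : Fin m → ℝ) (hv : v ≠ 0) : 0 < v ⬝ᵥ v := by
  rcases (Function.ne_iff).mp hv with ⟨i, hi⟩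
  have : (0:ℝ) < v i ^ 2 := by
    have := abs_pos.mpr hi
    nlinarith [sq_abs (v i)]
  calc (0:ℝ) < ∑ j, (v j)^2 :=
      Finset.sum_pos' (fun j _ => sq_nonneg _) ⟨i, Finset.mem_univ i, this⟩
    _ = v ⬝ᵥ v := (sqnorm_eq_dot v).symm ▸ rfl

lemma spectral_decomp {m : ℕ} (S : Matrix (Fin m) (Fin m) ℝ) (hS : S.PosSemidef) (hne : S ≠ 0)
    (δ : Fin m → ℝ) :
    0 < lamMinPos S ∧ ∃ dpar dperp : Fin m → ℝ,
      δ = dpar + dperp ∧ S.mulVec dpar = 0 ∧ dpar ⬝ᵥ dperp = 0 ∧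
      sqnorm dpar = sqnorm δ - sqnorm dperp ∧
      lamMinPos S * sqnorm dperp ≤ δ ⬝ᵥ S.mulVec δ := by
  classical
  have hH : S.IsHermitian := hS.1
  set V : Matrix (Fin m) (Fin m) ℝ := (hH.eigenvectorUnitary : Matrix (Fin m) (Fin m) ℝ) with hV
  have hVr : V * star V = 1 := (Matrix.mem_unitaryGroup_iff).mp hH.eigenvectorUnitary.2
  have hVl : star (V) * V = 1 := (Matrix.mem_unitaryGroup_iff').mp hH.eigenvectorUnitary.2
  set lam : Fin m → ℝ := hH.eigenvalues with hlam
  have hspec : S = V * Matrix.diagonal lam * star V := by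
    have := hH.spectral_theorem
    simpa using this
  -- V preserves dot products
  have hdotV : ∀ a b : Fin m → ℝ, (V *ᵥ a) ⬝ᵥ (V *ᵥ b) = a ⬝ᵥ b := by
    intro a b
    rw [Matrix.dotProduct_mulVec]
    have h1 : (V *ᵥ a) ᵥ* V = a ᵥ* (star V * V) := by
      rw [← Matrix.vecMul_vecMul]
      congr 1
      rw [← Matrix.vecMul_transpose]
      rw [Matrix.star_eq_conjTranspose, Matrix.conjTranspose_eq_transpose_of_trivial]
    rw [h1, hVl, Matrix.vecMul_one]
  have hVinj : ∀ a b : Fin m → ℝ, V *ᵥ a = V *ᵥ b → a = b := by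
    intro a b hab
    have : (star V) *ᵥ (V *ᵥ a) = (star V) *ᵥ (V *ᵥ b) := by rw [hab]
    simpa [Matrix.mulVec_mulVec, hVl] using this
  -- the set of nonzero eigenvalues
  set E : Set ℝ := {c : ℝ | c ≠ 0 ∧ ∃ v : Fin m → ℝ, v ≠ 0 ∧ S.mulVec v = c • v} with hE
  have hEsub : E ⊆ Set.range lam := by
    rintro c ⟨hc0, v, hv0, hvc⟩
    set w : Fin m → ℝ := (star V) *ᵥ v with hw
    have hvVw : v = V *ᵥ w := by
      rw [hw, Matrix.mulVec_mulVec, hVr, Matrix.one_mulVec]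
    have hw0 : w ≠ 0 := by
      intro h0
      apply hv0
      rw [hvVw, h0, Matrix.mulVec_zero]
    have hDw : (Matrix.diagonal lam) *ᵥ w = c • w := by
      apply hVinj
      have h2 : V *ᵥ ((Matrix.diagonal lam) *ᵥ w) = S *ᵥ v := by
        rw [hspec, hvVw]
        simp only [Matrix.mulVec_mulVec, ← Matrix.mul_assoc]
        rw [Matrix.mul_assoc (V * Matrix.diagonal lam), hVl, Matrix.mul_one]
      rw [h2, hvc, hvVw, Matrix.mulVec_smul]
    rcases Function.ne_iff.mp hw0 with ⟨i, hi⟩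
    refine ⟨i, ?_⟩
    have := congrFun hDw i
    rw [Matrix.mulVec_diagonal] at this
    have : lam i * w i = c * w i := this
    rw [mul_eq_mul_right_iff] at this
    rcases this with h | h
    · exact h.symm ▸ rfl
    · exact absurd h hi
  have hEpos : ∀ x ∈ E, 0 < x := by
    rintro c ⟨hc0, v, hv0, hvc⟩
    have h1 : 0 ≤ v ⬝ᵥ (S *ᵥ v) := by simpa using hS.dotProduct_mulVec_nonneg v
    rw [hvc] at h1
    have h2 : v ⬝ᵥ (c • v) = c * (v ⬝ᵥ v) := by
      simp [dotProduct, Finset.mul_sum, mul_comm, mul_left_comm]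
    rw [h2] at h1
    have h3 : 0 < v ⬝ᵥ v := dot_self_pos v hv0
    have hc : 0 ≤ c := by nlinarith
    exact lt_of_le_of_ne hc (Ne.symm hc0)
  have hEbdd : BddBelow E := ⟨0, fun x hx => (hEpos x hx).le⟩
  have hEfin : E.Finite := (Set.finite_range lam).subset hEsub
  have hEne : E.Nonempty := by
    obtain ⟨v, t, ht0, hv0, hvt⟩ := hH.exists_eigenvector_of_ne_zero hne
    exact ⟨t, ht0, v, hv0, hvt⟩
  have hlamE : lamMinPos S = sInf E := by rw [lamMinPos, hE]
  have hmem : lamMinPos S ∈ E := by rw [hlamE]; exact hEne.csInf_mem hEfin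
  have hpos : 0 < lamMinPos S := hEpos _ hmem
  have hlamle : ∀ i, lam i ≠ 0 → lamMinPos S ≤ lam i := by
    intro i hi
    have hiE : lam i ∈ E := by
      refine ⟨hi, (hH.eigenvectorBasis i : EuclideanSpace ℝ (Fin m)), ?_, ?_⟩
      · intro h0
        exact hH.eigenvectorBasis.orthonormal.ne_zero i (by ext j; exact congrFun h0 j)
      · exact hH.mulVec_eigenvectorBasis i
    rw [hlamE]
    exact csInf_le hEbdd hiE
  set c : Fin m → ℝ := (star V) *ᵥ δ with hc
  have hδ : δ = V *ᵥ c := by rw [hc, Matrix.mulVec_mulVec, hVr, Matrix.one_mulVec]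
  set cpar : Fin m → ℝ := fun i => if lam i = 0 then c i else 0 with hcpar
  set cperp : Fin m → ℝ := fun i => if lam i = 0 then 0 else c i with hcperp
  have hcsum : c = cpar + cperp := by
    funext i
    by_cases h : lam i = 0 <;> simp [hcpar, hcperp, h]
  have hstarVV : ∀ w : Fin m → ℝ, (star V) *ᵥ (V *ᵥ w) = w := by
    intro w
    rw [Matrix.mulVec_mulVec, hVl, Matrix.one_mulVec]
  have hSdec : ∀ w : Fin m → ℝ, S *ᵥ (V *ᵥ w) = V *ᵥ (Matrix.diagonal lam *ᵥ w) := by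
    intro w
    rw [hspec]
    rw [← Matrix.mulVec_mulVec, ← Matrix.mulVec_mulVec, hstarVV]
  have hDpar : Matrix.diagonal lam *ᵥ cpar = 0 := by
    funext i
    rw [Matrix.mulVec_diagonal]
    by_cases h : lam i = 0 <;> simp [hcpar, h]
  refine ⟨hpos, V *ᵥ cpar, V *ᵥ cperp, ?_, ?_, ?_, ?_, ?_⟩
  · rw [← Matrix.mulVec_add, ← hcsum, ← hδ]
  · rw [hSdec, hDpar, Matrix.mulVec_zero]
  · rw [hdotV]
    apply Finset.sum_eq_zero
    intro i _
    by_cases h : lam i = 0 <;> simp [hcpar, hcperp, h]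
  · rw [hδ, sqnorm_eq_dot, sqnorm_eq_dot, sqnorm_eq_dot, hdotV, hdotV, hdotV, hcsum]
    have : ∀ i, (cpar + cperp) i * (cpar + cperp) i
        = cpar i * cpar i + cperp i * cperp i := by
      intro i
      by_cases h : lam i = 0 <;> simp [hcpar, hcperp, h]
    simp only [dotProduct, this, Finset.sum_add_distrib]
    ring
  · have hSδ : δ ⬝ᵥ S *ᵥ δ = ∑ i, c i * (lam i * c i) := by
      conv_lhs => rw [hδ, hSdec, hdotV]
      simp [dotProduct, Matrix.mulVec_diagonal]
    rw [hSδ, sqnorm_eq_dot, hdotV, dotProduct, Finset.mul_sum]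
    apply Finset.sum_le_sum
    intro i _
    by_cases h : lam i = 0
    · simp [hcperp, h]
    · have h1 : lamMinPos S ≤ lam i := hlamle i h
      have h2 : cperp i = c i := by simp [hcperp, h]
      rw [h2]
      nlinarith [sq_nonneg (c i)]

lemma strong_lower {m : ℕ} (S : Matrix (Fin m) (Fin m) ℝ) (ρ : Fin m → ℝ)
    (α : ℝ) (hα : 0 < α) (a : Fin m → ℝ) (ha : S.mulVec a = ρ)
    (hmin : ∀ β, S.mulVec β = ρ →
      l1norm a + α / 2 * sqnorm a ≤ l1norm β + α / 2 * sqnorm β)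
    (b : Fin m → ℝ) (hb : S.mulVec b = ρ) :
    l1norm a + α / 2 * sqnorm a + α / 2 * sqnorm (b - a)
      ≤ l1norm b + α / 2 * sqnorm b := by
  set σ : ℝ := sqnorm (b - a) with hσdef
  have hσ0 : 0 ≤ σ := sqnorm_nonneg _
  set g : ℝ := (l1norm b + α / 2 * sqnorm b) - (l1norm a + α / 2 * sqnorm a) with hg
  clear_value σ g
  have hg0 : 0 ≤ g := by
    have := hmin b hb
    rw [hg]; linarith
  suffices h : α / 2 * σ ≤ g by rw [hg] at h; linarith
  by_contra hcon
  push_neg at hcon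
  have hσpos : 0 < σ := by
    have h1 : 0 < α / 2 * σ := lt_of_le_of_lt hg0 hcon
    rcases lt_or_ge 0 σ with h | h
    · exact h
    · exfalso
      nlinarith [mul_nonpos_of_nonneg_of_nonpos (half_pos hα).le h]
  set t : ℝ := (α / 2 * σ - g) / (α * σ) with ht
  clear_value t
  have ht0 : 0 < t := by
    rw [ht]
    apply div_pos
    · linarith
    · positivity
  have ht1 : t < 1 := by
    rw [ht, div_lt_one (by positivity)]
    have h2 : 0 < α * σ := mul_pos hα hσpos
    have h3 : α / 2 * σ = α * σ / 2 := by ring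
    linarith
  set w : Fin m → ℝ := fun i => (1 - t) * a i + t * b i with hw
  have hwfeas : S.mulVec w = ρ := by
    have hw2 : w = (1 - t) • a + t • b := by
      funext i; simp [hw, smul_eq_mul]
    rw [hw2, Matrix.mulVec_add, Matrix.mulVec_smul, Matrix.mulVec_smul, ha, hb,
      ← add_smul]
    norm_num
  have hl1 : l1norm w ≤ (1 - t) * l1norm a + t * l1norm b := by
    rw [l1norm, l1norm, l1norm, Finset.mul_sum, Finset.mul_sum, ← Finset.sum_add_distrib]
    refine Finset.sum_le_sum fun i _ => ?_
    calc |(1 - t) * a i + t * b i| ≤ |(1 - t) * a i| + |t * b i| := abs_add_le _ _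
      _ = (1 - t) * |a i| + t * |b i| := by
          rw [abs_mul, abs_mul, abs_of_nonneg (by linarith : (0:ℝ) ≤ 1 - t),
            abs_of_nonneg ht0.le]
  have hsq : sqnorm w = (1 - t) * sqnorm a + t * sqnorm b - t * (1 - t) * σ := by
    rw [hσdef, sqnorm, sqnorm, sqnorm, sqnorm, Finset.mul_sum, Finset.mul_sum,
      Finset.mul_sum, ← Finset.sum_add_distrib, ← Finset.sum_sub_distrib]
    refine Finset.sum_congr rfl fun i _ => ?_
    simp only [hw, Pi.sub_apply]
    ring
  have hkey := hmin w hwfeas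
  have hstep : t * g ≥ α / 2 * (t * (1 - t)) * σ := by
    have : l1norm a + α / 2 * sqnorm a
        ≤ (1 - t) * (l1norm a + α / 2 * sqnorm a) + t * (l1norm b + α / 2 * sqnorm b)
          - α / 2 * (t * (1 - t)) * σ := by
      calc l1norm a + α / 2 * sqnorm a ≤ l1norm w + α / 2 * sqnorm w := hkey
        _ ≤ (1 - t) * (l1norm a + α / 2 * sqnorm a) + t * (l1norm b + α / 2 * sqnorm b)
            - α / 2 * (t * (1 - t)) * σ := by rw [hsq]; nlinarith [hl1]
    rw [hg]; nlinarith [this]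
  have hdiv : g ≥ α / 2 * (1 - t) * σ := by
    have h2 : t * g ≥ t * (α / 2 * (1 - t) * σ) := by nlinarith [hstep]
    exact le_of_mul_le_mul_left (by linarith [h2]) ht0
  have htval : α / 2 * σ * t = (α / 2 * σ - g) / 2 := by
    rw [ht]
    field_simp
  nlinarith [hdiv, htval]


/-- Point-identified estimation bound for the constrained elastic-net estimator:
on the stated event, `‖β̂^{(α)} − β*^{(α)}‖² ≤ 2 vₙ + 2(√d̄/α + M)√vₙ` with
`vₙ = (4Mrₙ + 2sₙ + 4M²qₙ)/Λ_min⁺(Σ)`. -/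
theorem statement7 (dbar N : ℕ)
    (S : Matrix (Fin dbar) (Fin dbar) ℝ) (hSpsd : S.PosSemidef) (hSne : S ≠ 0)
    (hSmin : ∃ v : Fin dbar → ℝ, v ≠ 0 ∧ S.mulVec v = 0)
    (ρ : Fin dbar → ℝ) (hρ : ∃ w, S.mulVec w = ρ)
    (α : ℝ) (hα : 0 < α)
    (βstar : Fin dbar → ℝ)
    (hβstarFeas : S.mulVec βstar = ρ)
    (hβstarMin : ∀ β : Fin dbar → ℝ, S.mulVec β = ρ →
      l1norm βstar + α / 2 * sqnorm βstar ≤ l1norm β + α / 2 * sqnorm β)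
    (X : Matrix (Fin N) (Fin dbar) ℝ) (ε : Fin N → ℝ) (y : Fin N → ℝ)
    (hy : y = X.mulVec βstar + ε)
    (n : ℝ) (hn : 0 < n)
    (qn rn sn σ2 : ℝ) (hqn0 : 0 ≤ qn) (hrn0 : 0 ≤ rn) (hsn0 : 0 ≤ sn) (hσ20 : 0 ≤ σ2)
    (hqn : ∀ i j, |(∑ k, X k i * X k j) / n - S i j| ≤ qn)
    (hrn : ∀ j, |X.transpose.mulVec ε j / n| ≤ rn)
    (hsn : |sqnorm ε / n - σ2| ≤ sn)
    (M : ℝ) (hM : l1norm βstar ≤ M)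
    (βhat : Fin dbar → ℝ)
    (hβhatFeas : sqnorm (y - X.mulVec βhat) / n ≤ σ2 + sn ∧ l1norm βhat ≤ M)
    (hβhatMin : ∀ β : Fin dbar → ℝ,
      sqnorm (y - X.mulVec β) / n ≤ σ2 + sn → l1norm β ≤ M →
      l1norm βhat + α / 2 * sqnorm βhat ≤ l1norm β + α / 2 * sqnorm β) :
    sqnorm (βhat - βstar)
      ≤ 2 * ((4 * M * rn + 2 * sn + 4 * M ^ 2 * qn) / lamMinPos S)
        + 2 * (Real.sqrt dbar / α + M)
          * Real.sqrt ((4 * M * rn + 2 * sn + 4 * M ^ 2 * qn) / lamMinPos S) := by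
  classical
  obtain ⟨hfeas1, hfeas2⟩ := hβhatFeas
  have hM0 : 0 ≤ M := le_trans (l1norm_nonneg βstar) hM
  set δ : Fin dbar → ℝ := βhat - βstar with hδdef
  clear_value δ
  have hδl1 : l1norm δ ≤ 2 * M := by
    have h := l1norm_sub_le βhat βstar
    rw [hδdef]
    linarith [hfeas2, hM]
  have hδl1nn : 0 ≤ l1norm δ := l1norm_nonneg δ
  set u : ℝ := 4 * M * rn + 2 * sn + 4 * M ^ 2 * qn with hu
  clear_value u
  have hu0 : 0 ≤ u := by
    rw [hu]
    have h1 : 0 ≤ M * rn := mul_nonneg hM0 hrn0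
    have h2 : 0 ≤ M ^ 2 * qn := mul_nonneg (sq_nonneg M) hqn0
    linarith
  -- Step 1: quadratic form bound
  have hyδ : y - X.mulVec βhat = ε - X.mulVec δ := by
    rw [hy, hδdef, Matrix.mulVec_sub]
    abel
  set w : Fin N → ℝ := X.mulVec δ with hw
  clear_value w
  have hfeas1' : sqnorm (ε - w) ≤ n * (σ2 + sn) := by
    rw [hyδ] at hfeas1
    rw [div_le_iff₀ hn] at hfeas1
    linarith [hfeas1]
  have hexp := sqnorm_sub_expand ε w
  have hεn : n * (σ2 - sn) ≤ sqnorm ε := by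
    have h := (abs_le.mp hsn).1
    have h2 : σ2 - sn ≤ sqnorm ε / n := by linarith
    have h3 := mul_le_mul_of_nonneg_left h2 hn.le
    rw [mul_div_cancel₀ _ (ne_of_gt hn)] at h3
    exact h3
  have hdotbound : ε ⬝ᵥ w ≤ n * (rn * l1norm δ) := by
    have hdotεw : ε ⬝ᵥ w = δ ⬝ᵥ (X.transpose.mulVec ε) := by
      rw [hw, Matrix.dotProduct_mulVec, Matrix.mulVec_transpose, dotProduct_comm]
    have habs : ∀ j, |X.transpose.mulVec ε j| ≤ n * rn := by
      intro j
      have h := hrn j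
      rw [abs_div, abs_of_pos hn] at h
      rw [div_le_iff₀ hn] at h
      linarith [h]
    have h2 := abs_dot_le δ (X.transpose.mulVec ε) (n * rn) habs
    have h3 : δ ⬝ᵥ (X.transpose.mulVec ε) ≤ l1norm δ * (n * rn) := le_trans (le_abs_self _) h2
    rw [hdotεw]
    calc δ ⬝ᵥ (X.transpose.mulVec ε) ≤ l1norm δ * (n * rn) := h3
      _ = n * (rn * l1norm δ) := by ring
  set Gn : Matrix (Fin dbar) (Fin dbar) ℝ :=
    Matrix.of (fun i j => (∑ k, X k i * X k j) / n) with hGn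
  clear_value Gn
  have hGrel : sqnorm w = n * (δ ⬝ᵥ Gn.mulVec δ) := by
    have hG : sqnorm w = ∑ i, ∑ j, δ i * ((∑ k, X k i * X k j) * δ j) := by
      rw [hw, sqnorm]
      simp only [Matrix.mulVec, dotProduct]
      have hk : ∀ k, (∑ i, X k i * δ i) ^ 2 = ∑ i, ∑ j, (X k i * δ i) * (X k j * δ j) :=
        fun k => by rw [sq, Finset.sum_mul_sum]
      simp only [hk]
      rw [Finset.sum_comm]
      refine Finset.sum_congr rfl fun i _ => ?_
      rw [Finset.sum_comm]
      refine Finset.sum_congr rfl fun j _ => ?_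
      rw [Finset.sum_mul, Finset.mul_sum]
      refine Finset.sum_congr rfl fun k _ => by ring
    have hG2 : δ ⬝ᵥ Gn.mulVec δ = ∑ i, ∑ j, δ i * (((∑ k, X k i * X k j) / n) * δ j) := by
      simp only [Matrix.mulVec, dotProduct, hGn, Matrix.of_apply, Finset.mul_sum]
    rw [hG, hG2, Finset.mul_sum]
    refine Finset.sum_congr rfl fun i _ => ?_
    rw [Finset.mul_sum]
    refine Finset.sum_congr rfl fun j _ => ?_
    field_simp
  have hsplit : δ ⬝ᵥ (Gn - S).mulVec δ = δ ⬝ᵥ Gn.mulVec δ - δ ⬝ᵥ S.mulVec δ := by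
    rw [Matrix.sub_mulVec, dotProduct_sub]
  have hqbound : |δ ⬝ᵥ (Gn - S).mulVec δ| ≤ qn * (l1norm δ * l1norm δ) := by
    refine quad_abs_bound _ qn (fun i j => ?_) δ
    have := hqn i j
    simpa [hGn, Matrix.sub_apply, Matrix.of_apply] using this
  have hGnle : δ ⬝ᵥ Gn.mulVec δ ≤ 2 * sn + 2 * (rn * l1norm δ) := by
    have h1 : n * (δ ⬝ᵥ Gn.mulVec δ) ≤ n * (2 * sn + 2 * (rn * l1norm δ)) := by
      rw [← hGrel]
      nlinarith [hfeas1', hexp, hεn, hdotbound]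
    exact le_of_mul_le_mul_left h1 hn
  have hkey : δ ⬝ᵥ S.mulVec δ ≤ u := by
    have h1 : δ ⬝ᵥ S.mulVec δ ≤ δ ⬝ᵥ Gn.mulVec δ + qn * (l1norm δ * l1norm δ) := by
      have := abs_le.mp hqbound
      linarith [hsplit, this.1]
    rw [hu]
    nlinarith [hGnle, hδl1, hδl1nn, hrn0, hqn0, mul_le_mul_of_nonneg_left hδl1 hqn0]
  -- Step 2: spectral decomposition
  obtain ⟨hpos, dpar, dperp, hsum, hpar0, hdot0, hsqsub, hquad⟩ :=
    spectral_decomp S hSpsd hSne δ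
  set v : ℝ := u / lamMinPos S with hv
  clear_value v
  have hv0 : 0 ≤ v := by rw [hv]; exact div_nonneg hu0 hpos.le
  have hQ0 : 0 ≤ sqnorm dperp := sqnorm_nonneg _
  have hQv : sqnorm dperp ≤ v := by
    rw [hv, le_div_iff₀ hpos]
    calc sqnorm dperp * lamMinPos S = lamMinPos S * sqnorm dperp := mul_comm _ _
      _ ≤ δ ⬝ᵥ S.mulVec δ := hquad
      _ ≤ u := hkey
  -- Step 3
  have hystar : y - X.mulVec βstar = ε := by rw [hy]; abel
  have hfeasstar : sqnorm (y - X.mulVec βstar) / n ≤ σ2 + sn := by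
    rw [hystar]
    have h := (abs_le.mp hsn).2
    linarith
  have hfhat_le : l1norm βhat + α / 2 * sqnorm βhat
      ≤ l1norm βstar + α / 2 * sqnorm βstar := hβhatMin βstar hfeasstar hM
  have hbfeas : S.mulVec (βstar + dpar) = ρ := by
    rw [Matrix.mulVec_add, hβstarFeas, hpar0, add_zero]
  have hstrong := strong_lower S ρ α hα βstar hβstarFeas hβstarMin (βstar + dpar) hbfeas
  have h1 : βstar + dpar - βstar = dpar := by abel
  rw [h1] at hstrong
  have h2 : βstar + dpar = βhat - dperp := by
    have hb2 : βhat - βstar = dpar + dperp := by rw [← hδdef, hsum]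
    funext i
    have := congrFun hb2 i
    simp only [Pi.sub_apply, Pi.add_apply] at this ⊢
    linarith
  rw [h2] at hstrong
  set Q : ℝ := sqnorm dperp with hQ
  clear_value Q
  have hl1p : l1norm (βhat - dperp) ≤ l1norm βhat + l1norm dperp := l1norm_sub_le _ _
  have hsqp : sqnorm (βhat - dperp)
      = sqnorm βhat - 2 * (βhat ⬝ᵥ dperp) + Q := by
    rw [hQ]; exact sqnorm_sub_expand _ _
  have hsqrtQ0 : 0 ≤ Real.sqrt Q := Real.sqrt_nonneg _
  have hdot : -(βhat ⬝ᵥ dperp) ≤ M * Real.sqrt Q := by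
    have h3 := abs_dot_le βhat dperp (Real.sqrt Q) (fun i => by
      rw [hQ]; exact abs_apply_le_sqrt dperp i)
    have h4 : |βhat ⬝ᵥ dperp| ≤ M * Real.sqrt Q := by
      calc |βhat ⬝ᵥ dperp| ≤ l1norm βhat * Real.sqrt Q := h3
        _ ≤ M * Real.sqrt Q := mul_le_mul_of_nonneg_right hfeas2 hsqrtQ0
    linarith [neg_abs_le (βhat ⬝ᵥ dperp)]
  have hl1perp : l1norm dperp ≤ Real.sqrt dbar * Real.sqrt Q := by
    rw [hQ]; exact l1norm_le_sqrt dperp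
  have hP : α / 2 * sqnorm dpar
      ≤ Real.sqrt dbar * Real.sqrt Q + α * (M * Real.sqrt Q) + α / 2 * Q := by
    have hmul := mul_le_mul_of_nonneg_left hdot hα.le
    have hsqp2 : α / 2 * sqnorm (βhat - dperp)
        = α / 2 * sqnorm βhat - α * (βhat ⬝ᵥ dperp) + α / 2 * Q := by
      rw [hsqp]; ring
    linarith [hstrong, hfhat_le, hl1p, hsqp2, hl1perp, hmul]
  have hP2 : sqnorm dpar ≤ 2 * (Real.sqrt dbar / α + M) * Real.sqrt Q + Q := by
    have hα2 : 0 < α / 2 := half_pos hα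
    have heq : Real.sqrt dbar * Real.sqrt Q + α * (M * Real.sqrt Q) + α / 2 * Q
        = α / 2 * (2 * (Real.sqrt dbar / α + M) * Real.sqrt Q + Q) := by
      field_simp
    rw [heq] at hP
    exact le_of_mul_le_mul_left hP hα2
  have hsqδ : sqnorm δ = sqnorm dpar + Q := by rw [hQ]; linarith [hsqsub]
  have hsqrtQv : Real.sqrt Q ≤ Real.sqrt v := Real.sqrt_le_sqrt hQv
  have hB0 : 0 ≤ Real.sqrt dbar / α + M :=
    add_nonneg (div_nonneg (Real.sqrt_nonneg _) hα.le) hM0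
  have hBQ : 2 * (Real.sqrt dbar / α + M) * Real.sqrt Q
      ≤ 2 * (Real.sqrt dbar / α + M) * Real.sqrt v :=
    mul_le_mul_of_nonneg_left hsqrtQv (by linarith)
  calc sqnorm δ = sqnorm dpar + Q := hsqδ
    _ ≤ 2 * (Real.sqrt dbar / α + M) * Real.sqrt Q + Q + Q := by linarith [hP2]
    _ ≤ 2 * v + 2 * (Real.sqrt dbar / α + M) * Real.sqrt v := by
        linarith [hBQ, hQv]


end Statement7
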